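/- Let C be a commutative monoid and 0 → N_1 → N → N_2 → 0 a short exact sequence of right H(C)-modules. Then 0 → G_*(C, N_1) → G_*(C, N) → G_*(C, N_2) → 0 is a Y-exact sequence of left Γ-modules: it is objectwise exact, and moreover for every partition λ = (λ_1 ≥ ⋯ ≥ λ_k ≥ 1) with λ_1 + ⋯ + λ_k = n, the induced map on Σ(λ)-invariants G_*(C, N)([n])^{Σ(λ)} → G_*(C, N_2)([n])^{Σ(λ)} is surjective, where Σ(λ) = Σ_{λ_1} × ⋯ × Σ_{λ_k} ⊂ Σ_n acts via the automorphisms of [n] in Γ. -/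

import Mathlib

open CategoryTheory Opposite DirectSum

set_option maxHeartbeats 1000000
set_option synthInstance.maxHeartbeats 1000000

abbrev HCat (C : Type) [CommMonoid C] := C

instance (C : Type) [CommMonoid C] : Category (HCat C) where
  Hom a b := {c : C // c * a = b}
  id a := ⟨1, one_mul a⟩
  comp f g := ⟨g.1 * f.1, by rw [mul_assoc, f.2, g.2]⟩
  id_comp f := Subtype.ext (mul_one f.1)
  comp_id f := Subtype.ext (one_mul f.1)
  assoc f g h := Subtype.ext (mul_assoc h.1 g.1 f.1).symm

abbrev RightHMod (C : Type) [CommMonoid C] := (HCat C)ᵒᵖ ⥤ AddCommGrpCat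

variable (C : Type) [CommMonoid C] [DecidableEq C]

/-- `G_*(C,N)([n]) = ⊕_{(a_1,...,a_n) ∈ C^n} N(a_1⋯a_n)`. -/
abbrev GstObj (N : RightHMod C) (n : ℕ) :=
  ⨁ v : Fin n → C, N.obj (op ((∏ i, v i : C) : HCat C))

/-- The map `G_*(C,N) → G_*(C,N')` induced by a morphism `φ : N ⟶ N'`. -/
noncomputable def GstMapHom {N N' : RightHMod C} (φ : N ⟶ N') (n : ℕ) :
    GstObj C N n →+ GstObj C N' n :=
  DirectSum.toAddMonoid (fun v =>
    (DirectSum.of (fun w : Fin n → C => N'.obj (op ((∏ i, w i : C) : HCat C))) v).comp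
      (φ.app (op ((∏ i, v i : C) : HCat C))).hom)

/-- The action of a permutation `σ ∈ Σ_n` (an automorphism of `[n]` in `Γ`) on
`G_*(C,N)([n])`: the summand indexed by `(a_1,...,a_n)` is sent identically to the
summand indexed by `(a_{σ⁻¹(1)},...,a_{σ⁻¹(n)})`. -/
noncomputable def permAct (N : RightHMod C) {n : ℕ} (σ : Equiv.Perm (Fin n)) :
    GstObj C N n →+ GstObj C N n :=
  DirectSum.toAddMonoid (fun v =>
    (DirectSum.of (fun w : Fin n → C => N.obj (op ((∏ i, w i : C) : HCat C)))
        (v ∘ σ.symm)).comp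
      (N.map (Quiver.Hom.op
        (⟨1, by
            rw [one_mul]
            exact Equiv.prod_comp σ.symm v⟩ :
          ((∏ i, (v ∘ σ.symm) i : C) : HCat C) ⟶ ((∏ i, v i : C) : HCat C)))).hom)

/-- Membership in the standard Young subgroup `Σ(λ) ⊆ Σ_n` of a partition
`λ = (λ_1 ≥ ⋯ ≥ λ_k)`: a permutation lies in `Σ(λ)` iff it preserves the
consecutive blocks of sizes `λ_1, ..., λ_k`. -/
def inYoung (lam : List ℕ) {n : ℕ} (σ : Equiv.Perm (Fin n)) : Prop :=
  ∀ i : Fin n,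
    (List.range lam.length).countP (fun j => (lam.take (j+1)).sum ≤ (σ i : ℕ)) =
    (List.range lam.length).countP (fun j => (lam.take (j+1)).sum ≤ (i : ℕ))

/-- An element of `G_*(C,N)([n])` invariant under the Young subgroup `Σ(λ)`. -/
def isInvariant (N : RightHMod C) (lam : List ℕ) {n : ℕ} (x : GstObj C N n) : Prop :=
  ∀ σ : Equiv.Perm (Fin n), inYoung lam σ → permAct C N σ x = x


section Aux

/-- Transport along an equality of objects of `HCat C`. -/
noncomputable def Ntrans (N : RightHMod C) {a b : HCat C} (h : a = b) :
    N.obj (op a) →+ N.obj (op b) :=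
  (N.map (eqToHom (congrArg op h))).hom

lemma Ntrans_rfl (N : RightHMod C) {a : HCat C} (z : N.obj (op a)) :
    Ntrans C N (rfl : a = a) z = z := by
  simp [Ntrans]

lemma Ntrans_trans (N : RightHMod C) {a b c : HCat C} (h1 : a = b) (h2 : b = c)
    (z : N.obj (op a)) :
    Ntrans C N h2 (Ntrans C N h1 z) = Ntrans C N (h1.trans h2) z := by
  subst h1; subst h2; simp [Ntrans]

lemma Ntrans_natural {N N' : RightHMod C} (phi : N ⟶ N') {a b : HCat C} (h : a = b)
    (z : N.obj (op a)) :
    phi.app (op b) (Ntrans C N h z) = Ntrans C N' h (phi.app (op a) z) := by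
  subst h; simp [Ntrans]

lemma map_subtype_one (N : RightHMod C) {a b : HCat C} (pf : (1 : C) * a = b)
    (z : N.obj (op b)) :
    N.map (Quiver.Hom.op (⟨1, pf⟩ : a ⟶ b)) z
      = Ntrans C N (show b = a by rw [← pf, one_mul]) z := by
  obtain rfl : a = b := by rw [← pf, one_mul]
  have h1 : (⟨1, pf⟩ : a ⟶ a) = 𝟙 a := Subtype.ext rfl
  rw [h1]
  simp [Ntrans]

lemma Gst_of_apply (N : RightHMod C) {n : ℕ} {u u' : Fin n → C} (h : u = u')
    (z : N.obj (op ((∏ i, u i : C) : HCat C))) :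
    (DirectSum.of (fun w : Fin n → C => N.obj (op ((∏ i, w i : C) : HCat C))) u z) u'
      = Ntrans C N (show ((∏ i, u i : C) : HCat C) = ((∏ i, u' i : C) : HCat C) by rw [h]) z := by
  subst h
  rw [DirectSum.of_eq_same]
  exact (Ntrans_rfl C N z).symm

lemma Ntrans_index_congr (N : RightHMod C) {n : ℕ}
    (f : ∀ u : Fin n → C, N.obj (op ((∏ i, u i : C) : HCat C)))
    {u u' : Fin n → C} (huu : u = u') {b : HCat C}
    (h : ((∏ i, u i : C) : HCat C) = b) (h' : ((∏ i, u' i : C) : HCat C) = b) :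
    Ntrans C N h (f u) = Ntrans C N h' (f u') := by
  subst huu; rfl

lemma GstMapHom_apply {N N' : RightHMod C} (phi : N ⟶ N') {n : ℕ} (x : GstObj C N n)
    (w : Fin n → C) :
    (GstMapHom C phi n x) w = phi.app (op ((∏ i, w i : C) : HCat C)) (x w) := by
  induction x using DirectSum.induction_on with
  | zero => simp
  | of v z =>
    simp only [GstMapHom, DirectSum.toAddMonoid_of, AddMonoidHom.comp_apply]
    by_cases h : v = w
    · rw [Gst_of_apply C N' h, Gst_of_apply C N h, Ntrans_natural]
    · rw [DirectSum.of_eq_of_ne _ _ _ (Ne.symm h), DirectSum.of_eq_of_ne _ _ _ (Ne.symm h), map_zero]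
  | add a b ha hb =>
    rw [map_add, DirectSum.add_apply, DirectSum.add_apply, map_add, ha, hb]

lemma permAct_apply (N : RightHMod C) {n : ℕ} (σ : Equiv.Perm (Fin n))
    (x : GstObj C N n) (w : Fin n → C) :
    (permAct C N σ x) w
      = Ntrans C N
          (show ((∏ i, (w ∘ ⇑σ) i : C) : HCat C) = ((∏ i, w i : C) : HCat C) from
            Equiv.prod_comp σ w) (x (w ∘ ⇑σ)) := by
  induction x using DirectSum.induction_on with
  | zero => simp
  | of v z =>
    simp only [permAct, DirectSum.toAddMonoid_of, AddMonoidHom.comp_apply]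
    by_cases h : v = w ∘ ⇑σ
    · have h2 : v ∘ ⇑σ.symm = w := by
        funext i; rw [h]; simp
      rw [Gst_of_apply C N h2, map_subtype_one, Ntrans_trans,
        Gst_of_apply C N h, Ntrans_trans]
    · have h2 : v ∘ ⇑σ.symm ≠ w := by
        intro hc
        apply h
        funext i
        rw [← hc]
        simp
      rw [DirectSum.of_eq_of_ne _ _ _ (Ne.symm h2), DirectSum.of_eq_of_ne _ _ _ (Ne.symm h), map_zero]
  | add a b ha hb =>
    rw [map_add, DirectSum.add_apply, DirectSum.add_apply, map_add, ha, hb]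

/-- Assemble an element of `GstObj` from componentwise data supported on `S`. -/
noncomputable def mkGst (N : RightHMod C) (n : ℕ) (S : Finset (Fin n → C))
    (g : ∀ v : Fin n → C, N.obj (op ((∏ i, v i : C) : HCat C))) : GstObj C N n :=
  ∑ w ∈ S, DirectSum.of (fun w : Fin n → C => N.obj (op ((∏ i, w i : C) : HCat C))) w (g w)

lemma mkGst_apply (N : RightHMod C) (n : ℕ) (S : Finset (Fin n → C))
    (g : ∀ v : Fin n → C, N.obj (op ((∏ i, v i : C) : HCat C))) (v : Fin n → C) :
    mkGst C N n S g v = if v ∈ S then g v else 0 := by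
  classical
  induction S using Finset.induction_on with
  | empty =>
    unfold mkGst
    rw [Finset.sum_empty]
    simp [DirectSum.zero_apply]
  | @insert w S hws ih =>
    unfold mkGst at ih ⊢
    rw [Finset.sum_insert hws, DirectSum.add_apply, ih]
    by_cases hvw : v = w
    · subst hvw
      rw [DirectSum.of_eq_same, if_neg hws, add_zero,
        if_pos (Finset.mem_insert_self v S)]
    · rw [DirectSum.of_eq_of_ne _ _ _ hvw, zero_add]
      simp [Finset.mem_insert, hvw]

lemma inYoung_one (lam : List ℕ) {n : ℕ} : inYoung lam (1 : Equiv.Perm (Fin n)) := by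
  intro i
  rw [Equiv.Perm.one_apply]

lemma inYoung_inv (lam : List ℕ) {n : ℕ} {σ : Equiv.Perm (Fin n)}
    (h : inYoung lam σ) : inYoung lam σ⁻¹ := by
  intro i
  have h2 := h (σ⁻¹ i)
  rw [show σ (σ⁻¹ i) = i from σ.apply_symm_apply i] at h2
  exact h2.symm

lemma inYoung_mul (lam : List ℕ) {n : ℕ} {σ τ : Equiv.Perm (Fin n)}
    (hσ : inYoung lam σ) (hτ : inYoung lam τ) : inYoung lam (σ * τ) := by
  intro i
  have h1 := hσ (τ i)
  have h2 := hτ i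
  simp only [Equiv.Perm.mul_apply]
  exact h1.trans h2

/-- Two tuples are related when they differ by a permutation in the Young subgroup. -/
def yrel (lam : List ℕ) {n : ℕ} (v w : Fin n → C) : Prop :=
  ∃ σ : Equiv.Perm (Fin n), inYoung lam σ ∧ w = v ∘ ⇑σ

lemma yrel_equivalence (lam : List ℕ) {n : ℕ} : Equivalence (yrel C lam (n := n)) := by
  constructor
  · intro v
    exact ⟨1, inYoung_one lam, by funext i; simp⟩
  · rintro v w ⟨σ, hσ, rfl⟩
    exact ⟨σ⁻¹, inYoung_inv lam hσ, by funext i; simp⟩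
  · rintro u v w ⟨σ, hσ, rfl⟩ ⟨τ, hτ, rfl⟩
    exact ⟨σ * τ, inYoung_mul lam hσ hτ, by funext i; simp [Equiv.Perm.mul_apply]⟩

end Aux

/-- If `0 → N₁ → N → N₂ → 0` is a short exact sequence of right `H(C)`-modules, then
`0 → G_*(C,N₁) → G_*(C,N) → G_*(C,N₂) → 0` is objectwise exact, and it is `Y`-exact:
for every partition `λ = (λ_1 ≥ ⋯ ≥ λ_k ≥ 1)` with `λ_1 + ⋯ + λ_k = n`, the induced
map on `Σ(λ)`-invariants `G_*(C,N)([n])^{Σ(λ)} → G_*(C,N₂)([n])^{Σ(λ)}` is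
surjective. -/
theorem Gst_of_short_exact_is_Y_exact
    {N₁ N N₂ : RightHMod C} (α : N₁ ⟶ N) (β : N ⟶ N₂)
    (hinj : ∀ a : C, Function.Injective (α.app (op (a : HCat C))))
    (hsurj : ∀ a : C, Function.Surjective (β.app (op (a : HCat C))))
    (hexact : ∀ a : C,
      Set.range (α.app (op (a : HCat C))) = (β.app (op (a : HCat C))) ⁻¹' {0}) :
    (∀ n : ℕ,
      Function.Injective (GstMapHom C α n) ∧
      Function.Surjective (GstMapHom C β n) ∧
      Set.range (GstMapHom C α n) = (GstMapHom C β n) ⁻¹' {0}) ∧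
    (∀ (n : ℕ) (lam : List ℕ), lam.Pairwise (· ≥ ·) → (∀ p ∈ lam, 0 < p) →
      lam.sum = n →
      ∀ x : GstObj C N₂ n, isInvariant C N₂ lam x →
        ∃ y : GstObj C N n, isInvariant C N lam y ∧ GstMapHom C β n y = x) := by
  classical
  -- a pointwise section of β, sending 0 to 0
  have hs_ex : ∀ (a : C) (z : N₂.obj (op (a : HCat C))),
      ∃ u : N.obj (op (a : HCat C)), β.app (op (a : HCat C)) u = z ∧ (z = 0 → u = 0) := by
    intro a z
    by_cases hz : z = 0
    · exact ⟨0, by simp [hz], fun _ => rfl⟩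
    · obtain ⟨u, hu⟩ := hsurj a z
      exact ⟨u, hu, fun h => absurd h hz⟩
  choose s hs hs0 using hs_ex
  constructor
  · intro n
    refine ⟨?_, ?_, ?_⟩
    · -- injectivity
      intro a b hab
      refine DFinsupp.ext fun w => ?_
      apply hinj ((∏ i, w i : C))
      rw [← GstMapHom_apply, ← GstMapHom_apply, hab]
    · -- surjectivity
      intro x
      refine ⟨mkGst C N n x.support (fun v => s _ (x v)), DFinsupp.ext fun w => ?_⟩
      rw [GstMapHom_apply, mkGst_apply]
      by_cases hw : w ∈ x.support
      · rw [if_pos hw, hs]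
      · rw [if_neg hw, map_zero]
        exact (DFinsupp.notMem_support_iff.mp hw).symm
    · -- exactness
      apply Set.Subset.antisymm
      · rintro _ ⟨z, rfl⟩
        simp only [Set.mem_preimage, Set.mem_singleton_iff]
        refine DFinsupp.ext fun w => ?_
        rw [GstMapHom_apply, GstMapHom_apply, DirectSum.zero_apply]
        have hm : α.app (op ((∏ i, w i : C) : HCat C)) (z w)
            ∈ Set.range (α.app (op ((∏ i, w i : C) : HCat C))) := ⟨z w, rfl⟩
        rw [hexact] at hm
        simpa using hm
      · intro y hy
        simp only [Set.mem_preimage, Set.mem_singleton_iff] at hy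
        have hy' : ∀ w : Fin n → C, β.app (op ((∏ i, w i : C) : HCat C)) (y w) = 0 := by
          intro w
          have := congrArg (fun t : GstObj C N₂ n => t w) hy
          simpa [GstMapHom_apply] using this
        have ht_ex : ∀ w : Fin n → C,
            ∃ u : N₁.obj (op ((∏ i, w i : C) : HCat C)),
              α.app (op ((∏ i, w i : C) : HCat C)) u = y w := by
          intro w
          have : y w ∈ Set.range (α.app (op ((∏ i, w i : C) : HCat C))) := by
            rw [hexact]
            simp [hy' w]
          exact this
        choose t ht using ht_ex
        refine ⟨mkGst C N₁ n y.support t, DFinsupp.ext fun w => ?_⟩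
        rw [GstMapHom_apply, mkGst_apply]
        by_cases hw : w ∈ y.support
        · rw [if_pos hw, ht]
        · rw [if_neg hw, map_zero]
          exact (DFinsupp.notMem_support_iff.mp hw).symm
  · intro n lam _ _ _ x hx
    -- componentwise form of the invariance of x
    have hxc : ∀ (σ : Equiv.Perm (Fin n)), inYoung lam σ → ∀ w : Fin n → C,
        Ntrans C N₂ (show ((∏ i, (w ∘ ⇑σ) i : C) : HCat C) = ((∏ i, w i : C) : HCat C) from
          Equiv.prod_comp σ w) (x (w ∘ ⇑σ)) = x w := by
      intro σ hσ w
      rw [← permAct_apply C N₂ σ x w, hx σ hσ]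
    -- orbit representatives
    let sd : Setoid (Fin n → C) := ⟨yrel C lam, yrel_equivalence C lam⟩
    let rep : (Fin n → C) → Fin n → C := fun v => (Quotient.mk sd v).out
    have hrep : ∀ v, yrel C lam (rep v) v := fun v => Quotient.exact (Quotient.out_eq (Quotient.mk sd v))
    have hrepc : ∀ v w, yrel C lam v w → rep v = rep w := fun v w h =>
      congrArg Quotient.out (Quotient.sound (a := v) (b := w) h)
    have hprod : ∀ v : Fin n → C, ((∏ i, (rep v) i : C) : HCat C) = ((∏ i, v i : C) : HCat C) := by
      intro v
      obtain ⟨σ, -, hσ⟩ := hrep v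
      conv_rhs => rw [hσ]
      exact (Equiv.prod_comp σ (rep v)).symm
    -- the lift, componentwise
    let f : ∀ u : Fin n → C, N.obj (op ((∏ i, u i : C) : HCat C)) := fun u => s _ (x u)
    let S : Finset (Fin n → C) :=
      Finset.image (fun p : (Fin n → C) × Equiv.Perm (Fin n) => p.1 ∘ ⇑p.2)
        (x.support ×ˢ Finset.univ)
    let g : ∀ v : Fin n → C, N.obj (op ((∏ i, v i : C) : HCat C)) :=
      fun v => Ntrans C N (hprod v) (f (rep v))
    have hyw : ∀ w : Fin n → C,
        mkGst C N n S g w = Ntrans C N (hprod w) (f (rep w)) := by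
      intro w
      rw [mkGst_apply]
      by_cases hw : w ∈ S
      · rw [if_pos hw]
      · rw [if_neg hw]
        have hx0 : x (rep w) = 0 := by
          by_contra hne
          apply hw
          obtain ⟨σ, hσY, hσ⟩ := hrep w
          refine Finset.mem_image.mpr ⟨(rep w, σ), ?_, hσ.symm⟩
          exact Finset.mem_product.mpr ⟨DFinsupp.mem_support_iff.mpr hne, Finset.mem_univ _⟩
        rw [show f (rep w) = 0 from hs0 _ _ hx0, map_zero]
    refine ⟨mkGst C N n S g, ?_, ?_⟩
    · -- invariance of the lift
      intro τ hτ
      refine DFinsupp.ext fun w => ?_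
      rw [permAct_apply, hyw (w ∘ ⇑τ), Ntrans_trans, hyw w]
      have hr : rep (w ∘ ⇑τ) = rep w := (hrepc w (w ∘ ⇑τ) ⟨τ, hτ, rfl⟩).symm
      exact Ntrans_index_congr C N f hr _ _
    · -- it lifts x
      refine DFinsupp.ext fun w => ?_
      rw [GstMapHom_apply, hyw w, Ntrans_natural, hs]
      obtain ⟨σ, hσY, hσ⟩ := hrep w
      have hrw : rep w = w ∘ ⇑σ⁻¹ := by
        funext i
        conv_rhs => rw [hσ]
        simp
      have hinvw := hxc σ⁻¹ (inYoung_inv lam hσY) w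
      rw [← hinvw]
      exact Ntrans_index_congr C N₂ (fun u => x u) hrw _ _
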